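/- arXiv:1012.1231 — 2 statements merged into one kernel-verified Lean document; each statement's English description precedes it below -/
import Mathlib

section
/- Let G be a bipartite graph with equipartition X ∪ Y, |X| = |Y|, and let U ⊆ X be a deficient set. Writing Y₀, Y₁, Y₂ for the vertices of Y with zero, exactly one, and at least two neighbors in U respectively, and X₁ for the vertices of U with a neighbor in Y₁, if U is minimally deficient then |X₁| = |Y₁| and 2|X − U| + |X₁| < 2(|Y₀| + |Y₁|). -/
/-- Number of neighbours in `U` of the vertex `y`, for the bipartite graph with
parts `α`, `β` given by the relation `R`. -/
noncomputable def nbrIn {α β : Type*} (R : α → β → Prop) (U : Set α) (y : β) : ℕ :=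
  {x | x ∈ U ∧ R x y}.ncard

/-- `|N^(2)(U)|`: each neighbour of `U` is counted with multiplicity
`min 2 (number of its neighbours in U)`. -/
noncomputable def N2 {α β : Type*} [Fintype β] (R : α → β → Prop) (U : Set α) : ℕ :=
  ∑ y : β, min 2 (nbrIn R U y)

/-- `U` is a deficient set: `|N^(2)(U)| < 2|U|`. -/
def Deficient {α β : Type*} [Fintype β] (R : α → β → Prop) (U : Set α) : Prop :=
  N2 R U < 2 * U.ncard

/-- `U` is a minimal deficient set. -/
def MinimalDeficient {α β : Type*} [Fintype β] (R : α → β → Prop) (U : Set α) : Prop :=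
  Deficient R U ∧ ∀ W ⊂ U, ¬ Deficient R W

/-- Degree of a vertex `x ∈ α` in the bipartite graph `R`. -/
noncomputable def degX {α β : Type*} (R : α → β → Prop) (x : α) : ℕ := {y | R x y}.ncard

/-- Degree of a vertex `y ∈ β` in the bipartite graph `R`. -/
noncomputable def degY {α β : Type*} (R : α → β → Prop) (y : β) : ℕ := {x | R x y}.ncard

/-- The bipartite graph `R` has a 2-factor: a spanning subgraph in which every
vertex has degree exactly `2`. -/
def HasBipTwoFactor {α β : Type*} (R : α → β → Prop) : Prop :=
  ∃ H : α → β → Prop, (∀ x y, H x y → R x y) ∧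
    (∀ x, {y | H x y}.ncard = 2) ∧ (∀ y, {x | H x y}.ncard = 2)

-- auxiliary lemmas

lemma nbrIn_mono {α β : Type*} [Fintype α] (R : α → β → Prop) {W U : Set α} (h : W ⊆ U) (y : β) :
    nbrIn R W y ≤ nbrIn R U y := by
  apply Set.ncard_le_ncard _ (Set.toFinite _)
  intro x hx
  exact ⟨h hx.1, hx.2⟩

lemma key_inj {α β : Type*} [Fintype α] [Fintype β] (R : α → β → Prop) (U : Set α)
    (hU : MinimalDeficient R U) {x : α} {y y' : β} (hyy' : y ≠ y')
    (hy : {x' | x' ∈ U ∧ R x' y} = {x}) (hy' : {x' | x' ∈ U ∧ R x' y'} = {x}) : False := by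
  have hxU : x ∈ U := by
    have : x ∈ ({x} : Set α) := rfl
    rw [← hy] at this; exact this.1
  set W : Set α := U \ {x} with hW
  have hWss : W ⊂ U := Set.sdiff_singleton_ssubset.mpr hxU
  have hnd := hU.2 W hWss
  have hWcard : W.ncard + 1 = U.ncard := Set.ncard_diff_singleton_add_one hxU (Set.toFinite _)
  -- nbrIn of y, y' in W is 0
  have hzero : ∀ z : β, {x' | x' ∈ U ∧ R x' z} = {x} → nbrIn R W z = 0 := by
    intro z hz
    have : {x' | x' ∈ W ∧ R x' z} = ∅ := by
      ext x'
      simp only [Set.mem_setOf_eq, Set.mem_empty_iff_false, iff_false, not_and]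
      rintro ⟨hx'U, hx'ne⟩ hR
      have : x' ∈ ({x} : Set α) := by rw [← hz]; exact ⟨hx'U, hR⟩
      exact hx'ne this
    rw [nbrIn, this, Set.ncard_empty]
  have hy1 : nbrIn R U y = 1 := by rw [nbrIn, hy, Set.ncard_singleton]
  have hy'1 : nbrIn R U y' = 1 := by rw [nbrIn, hy', Set.ncard_singleton]
  -- sum inequality : N2 R W + 2 ≤ N2 R U
  classical
  have hsum : N2 R W + 2 ≤ N2 R U := by
    have hpt : ∀ z : β, min 2 (nbrIn R W z) + ((if z = y then 1 else 0) + (if z = y' then 1 else 0))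
        ≤ min 2 (nbrIn R U z) := by
      intro z
      by_cases h1 : z = y
      · subst h1
        rw [hzero _ hy, if_pos rfl, if_neg hyy', hy1]; norm_num
      · by_cases h2 : z = y'
        · subst h2
          rw [hzero _ hy', if_neg h1, if_pos rfl, hy'1]; norm_num
        · rw [if_neg h1, if_neg h2]
          simpa using min_le_min (le_refl 2) (nbrIn_mono R (Set.diff_subset) z)
    calc N2 R W + 2
        = ∑ z : β, (min 2 (nbrIn R W z) + ((if z = y then 1 else 0) + (if z = y' then 1 else 0))) := by
          rw [N2, Finset.sum_add_distrib, Finset.sum_add_distrib]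
          simp [Finset.sum_ite_eq' Finset.univ]
      _ ≤ ∑ z : β, min 2 (nbrIn R U z) := Finset.sum_le_sum (fun z _ => hpt z)
      _ = N2 R U := rfl
  have hdef := hU.1
  rw [Deficient] at hdef hnd
  omega

theorem minimalDeficient_counts' {α β : Type*} [Fintype α] [Fintype β]
    (R : α → β → Prop) (hcard : Fintype.card α = Fintype.card β)
    (U : Set α) (hU : MinimalDeficient R U) :
    {x : α | x ∈ U ∧ ∃ y, nbrIn R U y = 1 ∧ R x y}.ncard
        = {y : β | nbrIn R U y = 1}.ncard ∧
      2 * Uᶜ.ncard + {x : α | x ∈ U ∧ ∃ y, nbrIn R U y = 1 ∧ R x y}.ncard <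
        2 * ({y : β | nbrIn R U y = 0}.ncard + {y : β | nbrIn R U y = 1}.ncard) := by
  classical
  set X1 : Set α := {x : α | x ∈ U ∧ ∃ y, nbrIn R U y = 1 ∧ R x y} with hX1
  set Y1 : Set β := {y : β | nbrIn R U y = 1} with hY1
  -- U is nonempty
  have hUne : U.Nonempty := by
    by_contra h
    rw [Set.not_nonempty_iff_eq_empty] at h
    have := hU.1
    rw [Deficient, h, Set.ncard_empty] at this
    omega
  have : Nonempty α := ⟨hUne.choose⟩
  -- the unique-neighbour function
  set f : β → α := fun y => if h : ∃ x, x ∈ U ∧ R x y then h.choose else Classical.arbitrary α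
    with hf
  have hfs : ∀ y ∈ Y1, {x' | x' ∈ U ∧ R x' y} = {f y} := by
    intro y hy
    obtain ⟨a, ha⟩ := Set.ncard_eq_one.mp hy
    have hex : ∃ x, x ∈ U ∧ R x y := by
      refine ⟨a, ?_⟩
      have : a ∈ ({a} : Set α) := rfl
      rw [← ha] at this; exact this
    have hfy : f y = a := by
      have hmem : (hex.choose) ∈ {x' | x' ∈ U ∧ R x' y} := hex.choose_spec
      rw [ha] at hmem
      simp only [hf, dif_pos hex]
      exact hmem
    rw [ha, hfy]
  have hinj : Set.InjOn f Y1 := by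
    intro y hy y' hy' heq
    by_contra hne
    exact key_inj R U hU hne (hfs y hy) (heq ▸ hfs y' hy')
  have himg : X1 = f '' Y1 := by
    ext x
    constructor
    · rintro ⟨hxU, y, hny, hR⟩
      refine ⟨y, hny, ?_⟩
      have : x ∈ {x' | x' ∈ U ∧ R x' y} := ⟨hxU, hR⟩
      rw [hfs y hny] at this
      exact this.symm
    · rintro ⟨y, hy, rfl⟩
      have : f y ∈ {x' | x' ∈ U ∧ R x' y} := by rw [hfs y hy]; rfl
      exact ⟨this.1, y, hy, this.2⟩
  have hcard1 : X1.ncard = Y1.ncard := by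
    rw [himg, Set.ncard_image_of_injOn hinj]
  refine ⟨hcard1, ?_⟩
  -- arithmetic part
  have hdef := hU.1
  rw [Deficient] at hdef
  have hUc : U.ncard + Uᶜ.ncard = Fintype.card α := by
    rw [Set.ncard_add_ncard_compl]
    simp [Set.ncard_univ, hcard]
  have hY0 : {y : β | nbrIn R U y = 0}.ncard
      = (Finset.univ.filter (fun y => nbrIn R U y = 0)).card := by
    rw [Set.ncard_eq_toFinset_card', Set.toFinset_setOf]
  have hY1c : Y1.ncard = (Finset.univ.filter (fun y => nbrIn R U y = 1)).card := by
    rw [hY1, Set.ncard_eq_toFinset_card', Set.toFinset_setOf]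
  have hbound : 2 * Fintype.card β ≤ N2 R U
      + (2 * {y : β | nbrIn R U y = 0}.ncard + Y1.ncard) := by
    have hpt : ∀ y : β, 2 ≤ min 2 (nbrIn R U y)
        + ((if nbrIn R U y = 0 then 2 else 0) + (if nbrIn R U y = 1 then 1 else 0)) := by
      intro y
      rcases h : nbrIn R U y with _ | n
      · simp
      · rcases n with _ | n <;> simp <;> omega
    calc 2 * Fintype.card β = ∑ _y : β, 2 := by simp [Finset.sum_const, mul_comm]
      _ ≤ ∑ y : β, (min 2 (nbrIn R U y)
          + ((if nbrIn R U y = 0 then 2 else 0) + (if nbrIn R U y = 1 then 1 else 0))) :=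
        Finset.sum_le_sum (fun y _ => hpt y)
      _ = N2 R U + (2 * {y : β | nbrIn R U y = 0}.ncard + Y1.ncard) := by
        rw [Finset.sum_add_distrib, Finset.sum_add_distrib, hY0, hY1c]
        congr 1
        congr 1
        · rw [Finset.sum_ite, Finset.sum_const, Finset.sum_const_zero]
          simp [mul_comm]
        · rw [Finset.sum_ite, Finset.sum_const, Finset.sum_const_zero]
          simp
  rw [hcard1]
  omega

/-- Computations from the proof of Lemma 4: if `U ⊆ X` is minimally deficient, with
`Y₀, Y₁` the vertices of `Y` having zero resp. exactly one neighbour in `U`, and `X₁`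
the vertices of `U` with a neighbour in `Y₁`, then `|X₁| = |Y₁|` and
`2|X - U| + |X₁| < 2(|Y₀| + |Y₁|)`. -/
theorem minimalDeficient_counts {α β : Type*} [Fintype α] [Fintype β]
    (R : α → β → Prop) (hcard : Fintype.card α = Fintype.card β)
    (U : Set α) (hU : MinimalDeficient R U) :
    {x : α | x ∈ U ∧ ∃ y, nbrIn R U y = 1 ∧ R x y}.ncard
        = {y : β | nbrIn R U y = 1}.ncard ∧
      2 * Uᶜ.ncard + {x : α | x ∈ U ∧ ∃ y, nbrIn R U y = 1 ∧ R x y}.ncard <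
        2 * ({y : β | nbrIn R U y = 0}.ncard + {y : β | nbrIn R U y = 1}.ncard) :=
  minimalDeficient_counts' R hcard U hU
end

section
/- A bipartite graph G with equipartition X ∪ Y contains a 2-factor if and only if |N^(2)(U)| ≥ 2|U| for every U ⊆ X. -/
/-! ### Auxiliary material for the proof -/

open Finset

attribute [local instance] Classical.propDecidable

lemma ncard_setOf_eq' {γ : Type*} [Fintype γ] (p : γ → Prop) :
    {x | p x}.ncard = (Finset.univ.filter p).card := by
  rw [Set.ncard_eq_toFinset_card', Set.toFinset_setOf]

section Ore

variable {α β : Type*} [Fintype α] [Fintype β] (R : α → β → Prop)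

/-- The edge set of the bipartite graph. -/
abbrev OreEdge := {p : α × β // R p.1 p.2}

/-- Neighbourhoods in the auxiliary bipartite graph used for Hall's theorem. -/
noncomputable def oreT :
    (α × Fin 2) ⊕ OreEdge R → Finset ((β × Fin 2) ⊕ OreEdge R)
  | .inl (x, _) => (univ.filter fun e : OreEdge R => e.1.1 = x).image Sum.inr
  | .inr e => {Sum.inl (e.1.2, 0), Sum.inl (e.1.2, 1), Sum.inr e}

lemma mem_oreT_inl {x : α} {i : Fin 2} {r : (β × Fin 2) ⊕ OreEdge R} :
    r ∈ oreT R (.inl (x, i)) ↔ ∃ e : OreEdge R, e.1.1 = x ∧ r = .inr e := by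
  simp only [oreT, mem_image, mem_filter, mem_univ, true_and]
  constructor
  · rintro ⟨e, he, rfl⟩; exact ⟨e, he, rfl⟩
  · rintro ⟨e, he, rfl⟩; exact ⟨e, he, rfl⟩

lemma mem_oreT_inr {e : OreEdge R} {r : (β × Fin 2) ⊕ OreEdge R} :
    r ∈ oreT R (.inr e) ↔
      r = .inl (e.1.2, 0) ∨ r = .inl (e.1.2, 1) ∨ r = .inr e := by
  simp [oreT]

/-- The forward (easy) direction of Ore's theorem. -/
lemma ore_of_two_factor (h : HasBipTwoFactor R) (U : Set α) :
    2 * U.ncard ≤ N2 R U := by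
  obtain ⟨H, hHR, hdX, hdY⟩ := h
  set F : Finset (α × β) := univ.filter (fun p => p.1 ∈ U ∧ H p.1 p.2) with hFdef
  have h1 : F.card = ∑ x : α, (F.filter fun p => p.1 = x).card :=
    card_eq_sum_card_fiberwise (fun p _ => mem_univ _)
  have h2 : F.card = ∑ y : β, (F.filter fun p => p.2 = y).card :=
    card_eq_sum_card_fiberwise (fun p _ => mem_univ _)
  have fibx : ∀ x : α, (F.filter fun p => p.1 = x).card = if x ∈ U then 2 else 0 := by
    intro x
    by_cases hx : x ∈ U
    · rw [if_pos hx]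
      have hbij : (F.filter fun p => p.1 = x)
          = {x} ×ˢ (univ.filter fun y => H x y) := by
        ext ⟨a, b⟩
        simp only [hFdef, mem_filter, mem_univ, true_and, Finset.mem_product,
          Finset.mem_singleton]
        constructor
        · rintro ⟨⟨_, h2⟩, rfl⟩; exact ⟨rfl, h2⟩
        · rintro ⟨rfl, h2⟩; exact ⟨⟨hx, h2⟩, rfl⟩
      rw [hbij, card_product, card_singleton, one_mul, ← ncard_setOf_eq', hdX x]
    · rw [if_neg hx]
      rw [card_eq_zero]
      ext p
      simp only [hFdef, mem_filter, mem_univ, true_and, notMem_empty, iff_false]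
      rintro ⟨⟨hp1, _⟩, rfl⟩
      exact hx hp1
  have fiby : ∀ y : β, (F.filter fun p => p.2 = y).card ≤ min 2 (nbrIn R U y) := by
    intro y
    refine le_min ?_ ?_
    · have : (F.filter fun p => p.2 = y).card ≤ (univ.filter fun x => H x y).card := by
        apply card_le_card_of_injOn Prod.fst
        · intro p hp
          simp only [hFdef, Finset.mem_coe, mem_filter, mem_univ, true_and] at hp
          simp only [Finset.mem_coe, mem_filter, mem_univ, true_and]
          rw [← hp.2]; exact hp.1.2
        · intro p hp q hq hpq
          simp only [coe_filter, Set.mem_setOf_eq] at hp hq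
          exact Prod.ext hpq (hp.2.trans hq.2.symm)
      calc (F.filter fun p => p.2 = y).card ≤ (univ.filter fun x => H x y).card := this
        _ = 2 := by rw [← ncard_setOf_eq', hdY y]
    · rw [nbrIn, ncard_setOf_eq']
      apply card_le_card_of_injOn Prod.fst
      · intro p hp
        simp only [hFdef, Finset.mem_coe, mem_filter, mem_univ, true_and] at hp
        simp only [Finset.mem_coe, mem_filter, mem_univ, true_and]
        rw [← hp.2]; exact ⟨hp.1.1, hHR _ _ hp.1.2⟩
      · intro p hp q hq hpq
        simp only [coe_filter, Set.mem_setOf_eq] at hp hq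
        exact Prod.ext hpq (hp.2.trans hq.2.symm)
  have hUcard : U.ncard = (univ.filter fun x => x ∈ U).card := by
    rw [← ncard_setOf_eq']; congr 1
  have key : 2 * U.ncard = F.card := by
    rw [h1]
    have : ∀ x : α, (F.filter fun p => p.1 = x).card = if x ∈ U then 2 else 0 := fibx
    calc 2 * U.ncard = ∑ x : α, (if x ∈ U then 2 else 0) := by
          rw [Finset.sum_ite, Finset.sum_const, Finset.sum_const, hUcard]
          simp [mul_comm]
      _ = ∑ x : α, (F.filter fun p => p.1 = x).card := by
          exact Finset.sum_congr rfl (fun x _ => (fibx x).symm)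
  rw [key, h2, N2]
  exact Finset.sum_le_sum (fun y _ => fiby y)

/-- Hall's condition for the auxiliary graph follows from Ore's condition. -/
lemma ore_hall (hore : ∀ U : Set α, 2 * U.ncard ≤ N2 R U)
    (S : Finset ((α × Fin 2) ⊕ OreEdge R)) :
    S.card ≤ (S.biUnion (oreT R)).card := by
  set A : Finset (α × Fin 2) := univ.filter (fun p => Sum.inl p ∈ S) with hA
  set E0 : Finset (OreEdge R) := univ.filter (fun e => Sum.inr e ∈ S) with hE0
  set U : Finset α := A.image Prod.fst with hU
  set Y0 : Finset β := E0.image (fun e => e.1.2) with hY0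
  set EU : Finset (OreEdge R) := univ.filter (fun e => e.1.1 ∈ U) with hEU
  set EUc : Finset (OreEdge R) := univ.filter (fun e => e.1.1 ∈ U ∧ e.1.2 ∉ Y0) with hEUc
  -- decomposition of S
  have hS : S = A.image Sum.inl ∪ E0.image Sum.inr := by
    ext v
    cases v with
    | inl p =>
        simp only [mem_union, mem_image, hA, hE0, mem_filter, mem_univ, true_and]
        constructor
        · intro h; exact Or.inl ⟨p, h, rfl⟩
        · rintro (⟨q, hq, h⟩ | ⟨e, _, h⟩)
          · obtain rfl : q = p := Sum.inl_injective h
            exact hq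
          · exact absurd h (by simp)
    | inr e =>
        simp only [mem_union, mem_image, hA, hE0, mem_filter, mem_univ, true_and]
        constructor
        · intro h; exact Or.inr ⟨e, h, rfl⟩
        · rintro (⟨q, _, h⟩ | ⟨e', he', h⟩)
          · exact absurd h (by simp)
          · obtain rfl : e' = e := Sum.inr_injective h
            exact he'
  have hScard : S.card = A.card + E0.card := by
    rw [hS, card_union_of_disjoint, card_image_of_injective _ Sum.inl_injective,
      card_image_of_injective _ Sum.inr_injective]
    simp [Finset.disjoint_left]
  have hAcard : A.card ≤ 2 * U.card := by
    have hsub : A ⊆ U ×ˢ (univ : Finset (Fin 2)) := by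
      intro p hp
      rw [mem_product]
      exact ⟨mem_image_of_mem _ hp, mem_univ _⟩
    calc A.card ≤ (U ×ˢ (univ : Finset (Fin 2))).card := card_le_card hsub
      _ = 2 * U.card := by rw [card_product]; simp [mul_comm]
  -- lower bound on the neighbourhood
  have hsub : (EU ∪ E0).image Sum.inr ∪ (Y0 ×ˢ (univ : Finset (Fin 2))).image Sum.inl
      ⊆ S.biUnion (oreT R) := by
    intro r hr
    rw [mem_union] at hr
    rcases hr with hr | hr
    · rw [mem_image] at hr
      obtain ⟨e, he, rfl⟩ := hr
      rw [mem_union] at he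
      rcases he with he | he
      · rw [hEU, mem_filter] at he
        obtain ⟨p, hp, hpx⟩ := mem_image.1 he.2
        rw [hA, mem_filter] at hp
        refine mem_biUnion.2 ⟨Sum.inl p, hp.2, ?_⟩
        rw [show (Sum.inl p : (α × Fin 2) ⊕ OreEdge R) = Sum.inl (p.1, p.2) from rfl,
          mem_oreT_inl]
        exact ⟨e, hpx.symm, rfl⟩
      · rw [hE0, mem_filter] at he
        exact mem_biUnion.2 ⟨Sum.inr e, he.2, (mem_oreT_inr R).2 (Or.inr (Or.inr rfl))⟩
    · rw [mem_image] at hr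
      obtain ⟨⟨y, j⟩, hyj, rfl⟩ := hr
      rw [mem_product] at hyj
      obtain ⟨e, he, hey⟩ := mem_image.1 hyj.1
      rw [hE0, mem_filter] at he
      refine mem_biUnion.2 ⟨Sum.inr e, he.2, ?_⟩
      rw [mem_oreT_inr]
      fin_cases j <;> simp [hey]
  have hNcard : (EU ∪ E0).card + 2 * Y0.card ≤ (S.biUnion (oreT R)).card := by
    have hdj : Disjoint ((EU ∪ E0).image (Sum.inr : OreEdge R → (β × Fin 2) ⊕ OreEdge R))
        ((Y0 ×ˢ (univ : Finset (Fin 2))).image Sum.inl) := by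
      simp [Finset.disjoint_left]
    have := card_le_card hsub
    rwa [card_union_of_disjoint hdj, card_image_of_injective _ Sum.inr_injective,
      card_image_of_injective _ Sum.inl_injective, card_product, card_univ,
      Fintype.card_fin, mul_comm] at this
  have hEUunion : E0.card + EUc.card ≤ (EU ∪ E0).card := by
    have hdj : Disjoint E0 EUc := by
      rw [Finset.disjoint_left]
      intro e he hec
      rw [hEUc, mem_filter] at hec
      exact hec.2.2 (mem_image_of_mem _ he)
    have hsub2 : E0 ∪ EUc ⊆ EU ∪ E0 := by
      intro e he
      rw [mem_union] at he ⊢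
      rcases he with he | he
      · exact Or.inr he
      · rw [hEUc, mem_filter] at he
        exact Or.inl (by rw [hEU, mem_filter]; exact ⟨mem_univ _, he.2.1⟩)
    calc E0.card + EUc.card = (E0 ∪ EUc).card := (card_union_of_disjoint hdj).symm
      _ ≤ (EU ∪ E0).card := card_le_card hsub2
  -- fiberwise count of EUc
  have hd : ∀ y : β, nbrIn R (↑U : Set α) y = (univ.filter fun x => x ∈ U ∧ R x y).card := by
    intro y
    rw [nbrIn, ncard_setOf_eq']
    congr 1
    ext x
    simp
  have hEUccard : EUc.card =
      ∑ y : β, (if y ∈ Y0 then 0 else (univ.filter fun x => x ∈ U ∧ R x y).card) := by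
    rw [card_eq_sum_card_fiberwise (f := fun e : OreEdge R => e.1.2)
      (t := univ) (fun _ _ => mem_univ _)]
    refine Finset.sum_congr rfl (fun y _ => ?_)
    by_cases hy : y ∈ Y0
    · rw [if_pos hy, card_eq_zero]
      ext e
      simp only [hEUc, mem_filter, mem_univ, true_and, notMem_empty, iff_false]
      rintro ⟨⟨_, hny⟩, rfl⟩
      exact hny hy
    · rw [if_neg hy]
      refine card_bij' (fun e _ => (e : α × β).1)
        (fun x hx => (⟨(x, y), (Finset.mem_filter.1 hx).2.2⟩ : OreEdge R))
        ?hi ?hj ?li ?ri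
      case hi =>
        intro e he
        rw [mem_filter] at he
        obtain ⟨heU, hey⟩ := he
        rw [hEUc, mem_filter] at heU
        rw [mem_filter]
        exact ⟨mem_univ _, heU.2.1, hey ▸ e.2⟩
      case hj =>
        intro x hx
        rw [mem_filter] at hx
        rw [mem_filter, hEUc, mem_filter]
        exact ⟨⟨mem_univ _, hx.2.1, hy⟩, rfl⟩
      case li =>
        intro e he
        exact Subtype.ext (Prod.ext rfl ((mem_filter.1 he).2).symm)
      case ri =>
        intro x _
        rfl
  -- Ore's condition
  have hOre : 2 * U.card ≤ 2 * Y0.card + EUc.card := by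
    have h1 := hore (↑U : Set α)
    rw [Set.ncard_coe_finset] at h1
    have h2 : N2 R (↑U : Set α) ≤
        ∑ y : β, (if y ∈ Y0 then 2 else (univ.filter fun x => x ∈ U ∧ R x y).card) := by
      rw [N2]
      refine Finset.sum_le_sum (fun y _ => ?_)
      rw [hd y]
      by_cases hy : y ∈ Y0
      · rw [if_pos hy]; exact min_le_left _ _
      · rw [if_neg hy]; exact min_le_right _ _
    have h4 : ∑ y : β, (if y ∈ Y0 then (2 : ℕ) else 0) = 2 * Y0.card := by
      rw [Finset.sum_ite, Finset.sum_const, Finset.sum_const]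
      have hfY : (univ.filter fun y => y ∈ Y0) = Y0 := by
        ext y; simp
      simp [hfY, mul_comm]
    have h3 : ∑ y : β, (if y ∈ Y0 then 2 else (univ.filter fun x => x ∈ U ∧ R x y).card)
        = 2 * Y0.card + EUc.card := by
      calc ∑ y : β, (if y ∈ Y0 then (2:ℕ) else (univ.filter fun x => x ∈ U ∧ R x y).card)
          = ∑ y : β, ((if y ∈ Y0 then (2:ℕ) else 0)
              + (if y ∈ Y0 then 0 else (univ.filter fun x => x ∈ U ∧ R x y).card)) := by
            refine Finset.sum_congr rfl (fun y _ => ?_)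
            by_cases hy : y ∈ Y0 <;> simp [hy]
        _ = (∑ y : β, (if y ∈ Y0 then (2:ℕ) else 0))
              + ∑ y : β, (if y ∈ Y0 then 0
                  else (univ.filter fun x => x ∈ U ∧ R x y).card) :=
            Finset.sum_add_distrib
        _ = 2 * Y0.card + EUc.card := by rw [h4, hEUccard]
    omega
  omega

/-- The hard direction: Ore's condition implies existence of a 2-factor. -/
lemma two_factor_of_ore (hcard : Fintype.card α = Fintype.card β)
    (hore : ∀ U : Set α, 2 * U.ncard ≤ N2 R U) : HasBipTwoFactor R := by
  obtain ⟨f, hfinj, hft⟩ :=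
    (Finset.all_card_le_biUnion_card_iff_exists_injective (oreT R)).1 (ore_hall R hore)
  have hbij : Function.Bijective f := by
    rw [Fintype.bijective_iff_injective_and_card]
    refine ⟨hfinj, ?_⟩
    simp [Fintype.card_sum, Fintype.card_prod, Fintype.card_fin, hcard]
  -- key facts
  have hK2 : ∀ (x : α) (i : Fin 2), ∃ e : OreEdge R, e.1.1 = x ∧ f (.inl (x, i)) = .inr e := by
    intro x i
    have := hft (.inl (x, i))
    rw [mem_oreT_inl] at this
    exact this
  have hused_iff : ∀ e : OreEdge R,
      f (.inr e) ≠ .inr e ↔ ∃ i : Fin 2, f (.inl (e.1.1, i)) = .inr e := by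
    intro e
    constructor
    · intro hne
      obtain ⟨v, hv⟩ := hbij.2 (.inr e)
      cases v with
      | inl p =>
          have hm := hft (.inl p)
          rw [show (Sum.inl p : (α × Fin 2) ⊕ OreEdge R) = Sum.inl (p.1, p.2) from rfl,
            mem_oreT_inl] at hm
          obtain ⟨e', he', hfe'⟩ := hm
          rw [show (Sum.inl p : (α × Fin 2) ⊕ OreEdge R) = Sum.inl (p.1, p.2) from rfl]
            at hv
          rw [hv] at hfe'
          obtain rfl : e = e' := Sum.inr_injective hfe'
          exact ⟨p.2, by rw [he']; exact hv⟩
      | inr e' =>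
          have hm := hft (.inr e')
          rw [mem_oreT_inr, hv] at hm
          rcases hm with h | h | h
          · exact absurd h (by simp)
          · exact absurd h (by simp)
          · obtain rfl : e = e' := Sum.inr_injective h
            exact absurd hv hne
    · rintro ⟨i, hi⟩
      intro hfe
      have := hfinj (hi.trans hfe.symm)
      exact absurd this (by simp)
  -- the 2-factor
  refine ⟨fun x y => ∃ h : R x y, f (.inr ⟨(x, y), h⟩) ≠ .inr ⟨(x, y), h⟩,
    fun x y hxy => hxy.choose, ?_, ?_⟩
  · -- X-degrees
    intro x
    obtain ⟨e0, he0x, hf0⟩ := hK2 x 0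
    obtain ⟨e1, he1x, hf1⟩ := hK2 x 1
    have hne : e0 ≠ e1 := by
      rintro rfl
      have := hfinj (hf0.trans hf1.symm)
      simp at this
    have hyne : e0.1.2 ≠ e1.1.2 := by
      intro h
      exact hne (Subtype.ext (Prod.ext (he0x.trans he1x.symm) h))
    have hset : {y | ∃ h : R x y, f (.inr ⟨(x, y), h⟩) ≠ .inr ⟨(x, y), h⟩}
        = {e0.1.2, e1.1.2} := by
      ext y
      simp only [Set.mem_setOf_eq, Set.mem_insert_iff, Set.mem_singleton_iff]
      constructor
      · rintro ⟨h, hu⟩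
        rw [hused_iff (⟨(x, y), h⟩ : OreEdge R)] at hu
        obtain ⟨i, hi⟩ := hu
        fin_cases i
        · have : f (.inl (x, (0 : Fin 2))) = .inr (⟨(x, y), h⟩ : OreEdge R) := hi
          rw [hf0] at this
          obtain he : e0 = ⟨(x, y), h⟩ := Sum.inr_injective this
          exact Or.inl (by rw [he])
        · have : f (.inl (x, (1 : Fin 2))) = .inr (⟨(x, y), h⟩ : OreEdge R) := hi
          rw [hf1] at this
          obtain he : e1 = ⟨(x, y), h⟩ := Sum.inr_injective this
          exact Or.inr (by rw [he])
      · intro hy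
        have key : ∀ (e : OreEdge R) (i : Fin 2), e.1.1 = x → f (.inl (x, i)) = .inr e →
            ∃ h : R x e.1.2, f (.inr ⟨(x, e.1.2), h⟩) ≠ .inr ⟨(x, e.1.2), h⟩ := by
          intro e i hex hfi
          have heq : (⟨(x, e.1.2), by rw [← hex]; exact e.2⟩ : OreEdge R) = e :=
            Subtype.ext (Prod.ext hex.symm rfl)
          refine ⟨by rw [← hex]; exact e.2, ?_⟩
          rw [heq, hused_iff]
          exact ⟨i, by rw [hex]; exact hfi⟩
        rcases hy with rfl | rfl
        · exact key e0 0 he0x hf0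
        · exact key e1 1 he1x hf1
    rw [hset, Set.ncard_pair hyne]
  · -- Y-degrees
    intro y
    have hK3 : ∀ j : Fin 2, ∃ e : OreEdge R, e.1.2 = y ∧ f (.inr e) = .inl (y, j) := by
      intro j
      obtain ⟨v, hv⟩ := hbij.2 (.inl (y, j))
      cases v with
      | inl p =>
          have hm := hft (.inl p)
          rw [show (Sum.inl p : (α × Fin 2) ⊕ OreEdge R) = Sum.inl (p.1, p.2) from rfl,
            mem_oreT_inl] at hm
          obtain ⟨e', _, hfe'⟩ := hm
          rw [show (Sum.inl p : (α × Fin 2) ⊕ OreEdge R) = Sum.inl (p.1, p.2) from rfl,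
            hv] at hfe'
          exact absurd hfe' (by simp)
      | inr e =>
          have hm := hft (.inr e)
          rw [mem_oreT_inr, hv] at hm
          rcases hm with h | h | h
          · obtain ⟨hy, _⟩ := Prod.mk.injEq .. ▸ Sum.inl_injective h
            exact ⟨e, hy.symm, by rw [hv, hy]⟩
          · obtain ⟨hy, _⟩ := Prod.mk.injEq .. ▸ Sum.inl_injective h
            exact ⟨e, hy.symm, by rw [hv, hy]⟩
          · exact absurd h (by simp)
    obtain ⟨e0, he0y, hf0⟩ := hK3 0
    obtain ⟨e1, he1y, hf1⟩ := hK3 1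
    have hne : e0 ≠ e1 := by
      rintro rfl
      have := hf0.symm.trans hf1
      simp at this
    have hxne : e0.1.1 ≠ e1.1.1 := by
      intro h
      exact hne (Subtype.ext (Prod.ext h (he0y.trans he1y.symm)))
    have hset : {x | ∃ h : R x y, f (.inr ⟨(x, y), h⟩) ≠ .inr ⟨(x, y), h⟩}
        = {e0.1.1, e1.1.1} := by
      ext x
      simp only [Set.mem_setOf_eq, Set.mem_insert_iff, Set.mem_singleton_iff]
      constructor
      · rintro ⟨h, hu⟩
        have hm := hft (.inr (⟨(x, y), h⟩ : OreEdge R))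
        rw [mem_oreT_inr] at hm
        rcases hm with hm | hm | hm
        · rw [← hf0] at hm
          obtain he : (⟨(x, y), h⟩ : OreEdge R) = e0 := Sum.inr_injective (hfinj hm)
          exact Or.inl (by rw [← he])
        · rw [← hf1] at hm
          obtain he : (⟨(x, y), h⟩ : OreEdge R) = e1 := Sum.inr_injective (hfinj hm)
          exact Or.inr (by rw [← he])
        · exact absurd hm hu
      · intro hx
        have key : ∀ (e : OreEdge R) (j : Fin 2), e.1.2 = y → f (.inr e) = .inl (y, j) →
            ∃ h : R e.1.1 y, f (.inr ⟨(e.1.1, y), h⟩) ≠ .inr ⟨(e.1.1, y), h⟩ := by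
          intro e j hey hfj
          have heq : (⟨(e.1.1, y), by rw [← hey]; exact e.2⟩ : OreEdge R) = e :=
            Subtype.ext (Prod.ext rfl hey.symm)
          refine ⟨by rw [← hey]; exact e.2, ?_⟩
          rw [heq, hfj]
          simp
        rcases hx with rfl | rfl
        · exact key e0 0 he0y hf0
        · exact key e1 1 he1y hf1
    rw [hset, Set.ncard_pair hxne]

end Ore

/-- Ore's theorem: a bipartite graph with equipartition `X ∪ Y` has a 2-factor iff
`|N^(2)(U)| ≥ 2|U|` for every `U ⊆ X`. -/
theorem bip_two_factor_iff_ore {α β : Type*} [Fintype α] [Fintype β]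
    (R : α → β → Prop) (hcard : Fintype.card α = Fintype.card β) :
    HasBipTwoFactor R ↔ ∀ U : Set α, 2 * U.ncard ≤ N2 R U := by
  constructor
  · exact fun h U => ore_of_two_factor R h U
  · exact fun h => two_factor_of_ore R hcard h
end
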